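/- Let V = ℂ^{n+1} (n ≥ 2) with basis e₀,…,e_n and dual basis x₀,…,x_n, and let P ⊂ S²V* be the hyperplane of quadratic forms apolar to the rank-two tensor t = e₀e₁. Then the cubic C = e₀e₁² ∈ S³V is not a multiple of e₀³, yet for every Q ∈ P the contraction Q ⌟ C is a scalar multiple of e₀. -/

import Mathlib

open MvPolynomial

/-- Iterated partial derivative `∏ᵢ ∂ᵢ^{α i}` applied to `T`. -/
noncomputable def monomialDeriv {m : ℕ} (α : Fin m →₀ ℕ) (T : MvPolynomial (Fin m) ℂ) :
    MvPolynomial (Fin m) ℂ :=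
  (List.finRange m).foldl (fun p i => (fun q => MvPolynomial.pderiv i q)^[α i] p) T

noncomputable def contract {m : ℕ} (Q T : MvPolynomial (Fin m) ℂ) :
    MvPolynomial (Fin m) ℂ :=
  Q.support.sum fun α => Q.coeff α • monomialDeriv α T

lemma iter_pderiv_zero {m : ℕ} (i : Fin m) (kk : ℕ) :
    (fun q : MvPolynomial (Fin m) ℂ => pderiv i q)^[kk] 0 = 0 :=
  Function.iterate_fixed (by simp) kk

lemma aux_foldl_zero {m : ℕ} {β : Type*} (e : β → Fin m) (a : β → ℕ) (l : List β) :
    l.foldl (fun p j => (fun q : MvPolynomial (Fin m) ℂ => pderiv (e j) q)^[a j] p) 0 = 0 := by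
  induction l with
  | nil => rfl
  | cons i t ih => simpa [iter_pderiv_zero] using ih

lemma aux_foldl_id {m : ℕ} {β : Type*} (e : β → Fin m) (a : β → ℕ) (l : List β)
    (p : MvPolynomial (Fin m) ℂ) (h : ∀ j ∈ l, a j = 0) :
    l.foldl (fun p j => (fun q : MvPolynomial (Fin m) ℂ => pderiv (e j) q)^[a j] p) p = p := by
  induction l with
  | nil => rfl
  | cons i t ih =>
    rw [List.foldl_cons, h i (by simp)]
    exact ih fun j hj => h j (by simp [hj])

lemma aux_foldl_kill {m : ℕ} {β : Type*} (e : β → Fin m) (a : β → ℕ) (l : List β)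
    (p : MvPolynomial (Fin m) ℂ) (hp : ∀ j ∈ l, pderiv (e j) p = 0)
    (h : ∃ j ∈ l, a j ≠ 0) :
    l.foldl (fun p j => (fun q : MvPolynomial (Fin m) ℂ => pderiv (e j) q)^[a j] p) p = 0 := by
  induction l with
  | nil => simp at h
  | cons i t ih =>
    rw [List.foldl_cons]
    rcases Nat.eq_zero_or_pos (a i) with hi | hi
    · rw [hi, Function.iterate_zero_apply]
      obtain ⟨j, hj, hja⟩ := h
      rcases List.mem_cons.mp hj with rfl | hj
      · exact absurd hi hja
      · exact ih (fun j hj => hp j (by simp [hj])) ⟨j, hj, hja⟩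
    · obtain ⟨c, hc⟩ := Nat.exists_eq_succ_of_ne_zero hi.ne'
      rw [hc, Function.iterate_succ_apply, hp i (by simp), iter_pderiv_zero]
      exact aux_foldl_zero e a t

lemma monomialDeriv_eq (k : ℕ) (d : Fin (k + 3) →₀ ℕ) :
    monomialDeriv d (X 0 * X 1 ^ 2) =
      (List.finRange (k+1)).foldl
        (fun p j => (fun q : MvPolynomial (Fin (k+3)) ℂ =>
          pderiv (j.succ.succ) q)^[d j.succ.succ] p)
        ((fun q => pderiv (1 : Fin (k+3)) q)^[d 1]
          ((fun q => pderiv (0 : Fin (k+3)) q)^[d 0] (X 0 * X 1 ^ 2))) := by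
  rw [monomialDeriv, List.finRange_succ, List.finRange_succ, List.map_cons,
    List.map_map, List.foldl_cons, List.foldl_cons, List.foldl_map]
  rfl

lemma hD_full (k : ℕ) (d : Fin (k+3) →₀ ℕ) (hsum : ∑ i, d i = 2) :
    (d = Finsupp.single 1 2 ∧ monomialDeriv d (X 0 * X 1 ^ 2) = (2:ℂ) • X 0) ∨
    (d = Finsupp.single 0 1 + Finsupp.single 1 1) ∨
    (d ≠ Finsupp.single 1 2 ∧ monomialDeriv d (X 0 * X 1 ^ 2) = 0) := by
  have h01 : (0 : Fin (k + 3)) ≠ 1 := by simp [Fin.ext_iff]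
  have hss0 : ∀ j : Fin (k+1), (j.succ.succ : Fin (k+3)) ≠ 0 := fun j => Fin.succ_ne_zero _
  have hss1 : ∀ j : Fin (k+1), (j.succ.succ : Fin (k+3)) ≠ 1 := by
    intro j h; have := congrArg Fin.val h; rw [Fin.val_succ, Fin.val_succ, Fin.val_one] at this; omega
  have hs0 : ∀ j : Fin (k+3), (Finsupp.single (1 : Fin (k+3)) 2) 0 = 0 := by
    simp [Finsupp.single_apply, h01.symm]
  have hp0 : pderiv (0 : Fin (k+3)) (X 0 * X 1 ^ 2 : MvPolynomial (Fin (k+3)) ℂ) = X 1 ^ 2 := by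
    simp [pderiv_mul, pderiv_X, Pi.single_apply, h01]
  have hp1 : pderiv (1 : Fin (k+3)) (X 0 * X 1 ^ 2 : MvPolynomial (Fin (k+3)) ℂ)
      = (2:ℂ) • (X 0 * X 1) := by
    simp [pderiv_mul, pderiv_X, Pi.single_apply, h01.symm, pow_two, two_smul, mul_add]
  have hp1' : pderiv (1 : Fin (k+3)) ((2:ℂ) • (X 0 * X 1) : MvPolynomial (Fin (k+3)) ℂ)
      = (2:ℂ) • X 0 := by
    rw [Derivation.map_smul]; simp [pderiv_mul, pderiv_X, Pi.single_apply, h01.symm]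
  rw [Fin.sum_univ_succ, Fin.sum_univ_succ] at hsum
  have hfs : (Fin.succ (0 : Fin (k+2))) = (1 : Fin (k+3)) := by simp [Fin.ext_iff]
  rw [hfs] at hsum
  rw [monomialDeriv_eq]
  obtain h0 | h0 | h0 : d 0 = 0 ∨ d 0 = 1 ∨ d 0 = 2 := by omega
  · obtain h1 | h1 | h1 : d 1 = 0 ∨ d 1 = 1 ∨ d 1 = 2 := by omega
    · right; right
      refine ⟨fun hEq => by rw [hEq] at h1; simp [Finsupp.single_apply] at h1, ?_⟩
      rw [h0, h1]
      simp only [Function.iterate_zero_apply]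
      apply aux_foldl_kill
      · intro j _
        simp [pderiv_mul, pderiv_X, Pi.single_apply, hss0 j, hss1 j, pow_two]
      · have hs : ∑ j : Fin (k+1), d j.succ.succ ≠ 0 := by omega
        obtain ⟨j, _, hj⟩ := Finset.exists_ne_zero_of_sum_ne_zero hs
        exact ⟨j, by simp, hj⟩
    · right; right
      refine ⟨fun hEq => by rw [hEq] at h1; simp [Finsupp.single_apply] at h1, ?_⟩
      rw [h0, h1]
      simp only [Function.iterate_zero_apply, Function.iterate_one]
      rw [hp1]
      apply aux_foldl_kill
      · intro j _
        rw [Derivation.map_smul]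
        simp [pderiv_mul, pderiv_X, Pi.single_apply, hss0 j, hss1 j]
      · have hs : ∑ j : Fin (k+1), d j.succ.succ ≠ 0 := by omega
        obtain ⟨j, _, hj⟩ := Finset.exists_ne_zero_of_sum_ne_zero hs
        exact ⟨j, by simp, hj⟩
    · left
      have hrest : ∀ j : Fin (k+1), d j.succ.succ = 0 := by
        have hz : ∑ j : Fin (k+1), d j.succ.succ = 0 := by omega
        intro j; exact Finset.sum_eq_zero_iff.mp hz j (Finset.mem_univ j)
      constructor
      · ext i
        refine Fin.cases ?_ (fun i => Fin.cases ?_ (fun j => ?_) i) i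
        · simp [Finsupp.single_apply, h0, h01.symm]
        · rw [hfs]; simp [Finsupp.single_apply, h1]
        · simp [Finsupp.single_apply, Ne.symm (hss1 j), hrest j]
      · rw [h0, h1]
        simp only [Function.iterate_zero_apply]
        have e2 : (fun q : MvPolynomial (Fin (k+3)) ℂ => pderiv (1:Fin (k+3)) q)^[2]
            (X 0 * X 1 ^ 2) = (2:ℂ) • X 0 := by
          rw [show (fun q : MvPolynomial (Fin (k+3)) ℂ => pderiv (1:Fin (k+3)) q)^[2]
              (X 0 * X 1 ^ 2) = pderiv 1 (pderiv 1 (X 0 * X 1 ^ 2)) from rfl, hp1, hp1']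
        rw [e2]
        exact aux_foldl_id _ _ _ _ fun j _ => hrest j
  · obtain h1 | h1 : d 1 = 0 ∨ d 1 = 1 := by omega
    · right; right
      refine ⟨fun hEq => by rw [hEq] at h1; simp [Finsupp.single_apply] at h1, ?_⟩
      rw [h0, h1]
      simp only [Function.iterate_zero_apply, Function.iterate_one]
      rw [hp0]
      apply aux_foldl_kill
      · intro j _
        simp [pderiv_mul, pderiv_X, Pi.single_apply, hss1 j, pow_two]
      · have hs : ∑ j : Fin (k+1), d j.succ.succ ≠ 0 := by omega
        obtain ⟨j, _, hj⟩ := Finset.exists_ne_zero_of_sum_ne_zero hs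
        exact ⟨j, by simp, hj⟩
    · right; left
      have hrest : ∀ j : Fin (k+1), d j.succ.succ = 0 := by
        have hz : ∑ j : Fin (k+1), d j.succ.succ = 0 := by omega
        intro j; exact Finset.sum_eq_zero_iff.mp hz j (Finset.mem_univ j)
      ext i
      refine Fin.cases ?_ (fun i => Fin.cases ?_ (fun j => ?_) i) i
      · simp [Finsupp.single_apply, h0, h01.symm]
      · rw [hfs]; simp [Finsupp.single_apply, h1, h01]
      · simp [Finsupp.single_apply, Ne.symm (hss0 j), Ne.symm (hss1 j), hrest j]
  · right; right
    refine ⟨fun hEq => by rw [hEq] at h0; simp [Finsupp.single_apply, h01.symm] at h0, ?_⟩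
    rw [h0]
    have e2 : (fun q : MvPolynomial (Fin (k+3)) ℂ => pderiv (0:Fin (k+3)) q)^[2]
        (X 0 * X 1 ^ 2) = 0 := by
      rw [show (fun q : MvPolynomial (Fin (k+3)) ℂ => pderiv (0:Fin (k+3)) q)^[2]
          (X 0 * X 1 ^ 2) = pderiv 0 (pderiv 0 (X 0 * X 1 ^ 2)) from rfl, hp0]
      simp [pderiv_mul, pderiv_X, Pi.single_apply, h01, pow_two]
    rw [e2, iter_pderiv_zero]
    exact aux_foldl_zero _ _ _

theorem stmt17 (n : ℕ) (hn : 2 ≤ n) :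
    (¬ ∃ a : ℂ, (X 0 * X 1 ^ 2 : MvPolynomial (Fin (n + 1)) ℂ) =
        a • (X 0 : MvPolynomial (Fin (n + 1)) ℂ) ^ 3) ∧
    ∀ Q : MvPolynomial (Fin (n + 1)) ℂ, Q.IsHomogeneous 2 →
      MvPolynomial.coeff (Finsupp.single 0 1 + Finsupp.single 1 1) Q = 0 →
      ∃ a : ℂ, contract Q (X 0 * X 1 ^ 2) =
        a • (X 0 : MvPolynomial (Fin (n + 1)) ℂ) := by
  obtain ⟨k, rfl⟩ : ∃ k, n = k + 2 := ⟨n - 2, by omega⟩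
  have h01 : (0 : Fin (k + 2 + 1)) ≠ 1 := by simp [Fin.ext_iff]
  constructor
  · rintro ⟨a, h⟩
    have := congrArg (coeff (Finsupp.single 0 1 + Finsupp.single 1 2)) h
    rw [X_pow_eq_monomial, X_pow_eq_monomial, X, monomial_mul, coeff_smul, coeff_monomial,
      coeff_monomial] at this
    rw [if_pos rfl, if_neg ?_] at this
    · simp at this
    · intro hEq
      have := DFunLike.congr_fun hEq 1
      simp [Finsupp.single_apply, h01, (Ne.symm h01)] at this
  · intro Q hQ hc
    refine ⟨2 * coeff (Finsupp.single 1 2) Q, ?_⟩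
    have hdeg : ∀ b : Fin (k+2+1) →₀ ℕ, b ∈ Q.support → ∑ i, b i = 2 := by
      intro b hb
      have h2 : b.degree = 2 := by
        by_contra hne
        exact mem_support_iff.mp hb (hQ.coeff_eq_zero hne)
      have h3 : ∑ i, b i = b.degree := by
        rw [Finsupp.degree]
        exact (Finset.sum_subset (Finset.subset_univ b.support) (by simp +contextual)).symm
      rw [h3, h2]
    unfold contract
    rw [Finset.sum_eq_single (Finsupp.single 1 2)]
    · have hsum2 : ∑ i, (Finsupp.single (1 : Fin (k+2+1)) 2) i = 2 := by
        simp [Finsupp.single_apply]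
      rcases hD_full k _ hsum2 with ⟨_, hD⟩ | hEq | ⟨hne, _⟩
      · rw [hD, smul_smul, mul_comm]
      · exfalso
        have := DFunLike.congr_fun hEq 0
        simp [Finsupp.single_apply, h01, Ne.symm h01] at this
      · exact absurd rfl hne
    · intro b hb hbne
      rcases hD_full k b (hdeg b hb) with ⟨hEq, _⟩ | hEq | ⟨_, hD⟩
      · exact absurd hEq hbne
      · rw [hEq, hc, zero_smul]
      · rw [hD, smul_zero]
    · intro hns
      rw [notMem_support_iff.mp hns, zero_smul]
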